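/- arXiv:0808.2152 — 2 statements merged into one kernel-verified Lean document; each statement's English description precedes it below -/
import Mathlib

section
/- For any integer d > 0 and any x > 0, P(χ²(d) ≤ d·[max(1 − δ_d − √(2x/d), 0)]²) ≤ exp(−x), where δ_d := √(π/(2d)) + exp(−d/16). -/
open MeasureTheory ProbabilityTheory
open scoped NNReal ENNReal

/-- The chi-squared distribution with `d` degrees of freedom: the law of the sum of squares
of `d` i.i.d. standard Gaussian random variables. -/
noncomputable def chiSq (d : ℕ) : Measure ℝ :=
  (Measure.pi fun _ : Fin d => gaussianReal 0 1).map fun x => ∑ i, (x i) ^ 2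

lemma gauss_sq_mgf {l : ℝ} (hl : 0 ≤ l) :
    ∫ t, Real.exp (-l * t ^ 2) ∂(gaussianReal 0 1) = 1 / Real.sqrt (1 + 2 * l) := by
  rw [gaussianReal_of_var_ne_zero 0 one_ne_zero]
  have hpdf : gaussianPDF 0 1 = fun x => ((Real.toNNReal (gaussianPDFReal 0 1 x) : ℝ≥0) : ℝ≥0∞) :=
    rfl
  rw [hpdf, integral_withDensity_eq_integral_smul (measurable_gaussianPDFReal 0 1).real_toNNReal]
  simp only [NNReal.smul_def, smul_eq_mul,
    Real.coe_toNNReal _ (gaussianPDFReal_nonneg 0 1 _)]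
  have hb : (0:ℝ) < l + 1/2 := by linarith
  have h1 : ∀ x : ℝ, gaussianPDFReal 0 1 x * Real.exp (-l * x ^ 2)
      = (Real.sqrt (2 * Real.pi))⁻¹ * Real.exp (-(l + 1/2) * x ^ 2) := by
    intro x
    simp only [gaussianPDFReal, NNReal.coe_one, mul_one, sub_zero]
    rw [mul_assoc, ← Real.exp_add]
    ring_nf
  simp_rw [h1]
  rw [integral_const_mul, integral_gaussian]
  have h3 : (0:ℝ) < Real.sqrt (2 * Real.pi) := Real.sqrt_pos.2 (by positivity)
  have h1p : (0:ℝ) < Real.sqrt (1 + 2 * l) := Real.sqrt_pos.2 (by linarith)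
  rw [inv_mul_eq_div, div_eq_div_iff h3.ne' h1p.ne', one_mul,
    ← Real.sqrt_mul (by positivity : (0:ℝ) ≤ Real.pi / (l + 1/2))]
  congr 1
  field_simp
  ring

lemma pi_mgf (d : ℕ) {l : ℝ} (hl : 0 ≤ l) :
    ∫ x : Fin d → ℝ, Real.exp (-l * ∑ i, (x i) ^ 2) ∂(Measure.pi fun _ => gaussianReal 0 1)
      = (1 / Real.sqrt (1 + 2 * l)) ^ d := by
  letI : MeasureSpace ℝ := ⟨gaussianReal 0 1⟩
  haveI : SigmaFinite (volume : Measure ℝ) := inferInstanceAs (SigmaFinite (gaussianReal 0 1))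
  have hvol : (volume : Measure (Fin d → ℝ)) = Measure.pi fun _ => gaussianReal 0 1 :=
    volume_pi
  rw [← hvol]
  have h1 : ∀ x : Fin d → ℝ, Real.exp (-l * ∑ i, (x i) ^ 2)
      = ∏ i, Real.exp (-l * (x i) ^ 2) := by
    intro x
    rw [← Real.exp_sum, Finset.mul_sum]
  simp_rw [h1]
  erw [MeasureTheory.integral_fintype_prod_eq_pow (ι := Fin d) (fun t => Real.exp (-l * t ^ 2))]
  rw [show (volume : Measure ℝ) = gaussianReal 0 1 from rfl, gauss_sq_mgf hl]
  simp

lemma sum_sq_measurable (d : ℕ) : Measurable (fun x : Fin d → ℝ => ∑ i, (x i) ^ 2) := by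
  fun_prop

lemma chernoff (d : ℕ) (a : ℝ) {l : ℝ} (hl : 0 ≤ l) :
    chiSq d {y : ℝ | y ≤ a}
      ≤ ENNReal.ofReal (Real.exp (l * a) * (1 / Real.sqrt (1 + 2 * l)) ^ d) := by
  have hmeas := sum_sq_measurable d
  have hset : MeasurableSet {y : ℝ | y ≤ a} := measurableSet_Iic
  rw [chiSq, Measure.map_apply hmeas hset]
  set μ := Measure.pi fun _ : Fin d => gaussianReal 0 1 with hμ
  set g : (Fin d → ℝ) → ℝ≥0∞ := fun x => ENNReal.ofReal (Real.exp (-l * ∑ i, (x i) ^ 2))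
    with hg
  have hgmeas : AEMeasurable g μ := by
    apply Measurable.aemeasurable
    fun_prop
  have hsub : (fun x : Fin d → ℝ => ∑ i, (x i) ^ 2) ⁻¹' {y : ℝ | y ≤ a}
      ⊆ {x | ENNReal.ofReal (Real.exp (-l * a)) ≤ g x} := by
    intro x hxa
    simp only [Set.mem_preimage, Set.mem_setOf_eq] at hxa ⊢
    exact ENNReal.ofReal_le_ofReal (Real.exp_le_exp.2 (by nlinarith))
  have hint : Integrable (fun x : Fin d → ℝ => Real.exp (-l * ∑ i, (x i) ^ 2)) μ := by
    apply Integrable.mono' (integrable_const (1:ℝ))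
    · exact (Measurable.aestronglyMeasurable (by fun_prop))
    · refine Filter.Eventually.of_forall fun x => ?_
      rw [Real.norm_eq_abs, abs_of_pos (Real.exp_pos _)]
      apply Real.exp_le_one_iff.2
      have : (0:ℝ) ≤ ∑ i, (x i) ^ 2 := Finset.sum_nonneg fun i _ => sq_nonneg _
      nlinarith
  have hlint : ∫⁻ x, g x ∂μ = ENNReal.ofReal ((1 / Real.sqrt (1 + 2 * l)) ^ d) := by
    rw [hg, ← MeasureTheory.ofReal_integral_eq_lintegral_ofReal hint
      (Filter.Eventually.of_forall fun x => (Real.exp_pos _).le), pi_mgf d hl]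
  have markov := mul_meas_ge_le_lintegral₀ hgmeas (ENNReal.ofReal (Real.exp (-l * a)))
  rw [hlint] at markov
  have key : ENNReal.ofReal (Real.exp (-l * a))
      * μ ((fun x : Fin d → ℝ => ∑ i, (x i) ^ 2) ⁻¹' {y : ℝ | y ≤ a})
      ≤ ENNReal.ofReal ((1 / Real.sqrt (1 + 2 * l)) ^ d) :=
    le_trans (mul_le_mul_right (measure_mono hsub) _) markov
  have hexp_pos : (0:ℝ) < Real.exp (-l * a) := Real.exp_pos _
  have hne0 : ENNReal.ofReal (Real.exp (-l * a)) ≠ 0 :=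
    (ENNReal.ofReal_pos.2 hexp_pos).ne'
  have hnetop : ENNReal.ofReal (Real.exp (-l * a)) ≠ ⊤ := ENNReal.ofReal_ne_top
  rw [mul_comm] at key
  have := (ENNReal.le_div_iff_mul_le (Or.inl hne0) (Or.inl hnetop)).2 key
  refine le_trans this ?_
  rw [← ENNReal.ofReal_div_of_pos hexp_pos]
  apply ENNReal.ofReal_le_ofReal
  rw [div_le_iff₀ hexp_pos]
  have hee : Real.exp (l * a) * Real.exp (-l * a) = 1 := by
    rw [← Real.exp_add]; simp
  nlinarith [pow_nonneg (by positivity : (0:ℝ) ≤ 1 / Real.sqrt (1 + 2 * l)) d]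

/-- For any integer `d > 0` and any `x > 0`,
`P(χ²(d) ≤ d · (max(1 − δ_d − √(2x/d), 0))²) ≤ exp(−x)`,
where `δ_d := √(π/(2d)) + exp(−d/16)`. -/
theorem chiSq_refined_lower_deviation (d : ℕ) (hd : 0 < d) (x : ℝ) (hx : 0 < x) :
    chiSq d {y : ℝ | y ≤ (d : ℝ) *
        (max (1 - (Real.sqrt (Real.pi / (2 * d)) + Real.exp (-(d : ℝ) / 16))
          - Real.sqrt (2 * x / d)) 0) ^ 2} ≤
      ENNReal.ofReal (Real.exp (-x)) := by
  have hdR : (0:ℝ) < d := Nat.cast_pos.2 hd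
  set δ : ℝ := Real.sqrt (Real.pi / (2 * d)) + Real.exp (-(d : ℝ) / 16) with hδ
  have hδpos : 0 < δ := by
    have := Real.sqrt_nonneg (Real.pi / (2 * d))
    have := Real.exp_pos (-(d : ℝ) / 16)
    rw [hδ]; linarith
  set s : ℝ := δ + Real.sqrt (2 * x / d) with hsdef
  have hsqx : Real.sqrt (2 * x / d) ^ 2 = 2 * x / d := Real.sq_sqrt (by positivity)
  have hsqnn : 0 ≤ Real.sqrt (2 * x / d) := Real.sqrt_nonneg _
  have hs_pos : 0 < s := by rw [hsdef]; linarith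
  have hs2 : 2 * x / d ≤ s ^ 2 := by nlinarith
  have h2x : 2 * x ≤ (d:ℝ) * s ^ 2 := by
    rw [div_le_iff₀ hdR] at hs2; linarith
  rcases le_or_gt (1 - δ - Real.sqrt (2 * x / d)) 0 with h | h
  · -- the max is 0
    have hmax : max (1 - δ - Real.sqrt (2 * x / d)) 0 = 0 := max_eq_right h
    rw [hmax]
    have hl : 0 ≤ (Real.exp (2 * x) - 1) / 2 := by
      have := Real.one_le_exp (by linarith : (0:ℝ) ≤ 2 * x)
      linarith
    refine le_trans (chernoff d ((d:ℝ) * 0 ^ 2) hl) (ENNReal.ofReal_le_ofReal ?_)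
    have h12l : 1 + 2 * ((Real.exp (2 * x) - 1) / 2) = Real.exp (2 * x) := by ring
    have hsq : Real.sqrt (Real.exp (2 * x)) = Real.exp x := by
      rw [show Real.exp (2 * x) = (Real.exp x) ^ 2 by rw [← Real.exp_nat_mul]; norm_num,
        Real.sqrt_sq (Real.exp_pos x).le]
    rw [h12l, hsq]
    have hle1 : 1 / Real.exp x ≤ 1 := by
      rw [div_le_one (Real.exp_pos x)]
      exact Real.one_le_exp hx.le
    have heq : 1 / Real.exp x = Real.exp (-x) := by
      rw [Real.exp_neg, one_div]
    calc Real.exp ((Real.exp (2 * x) - 1) / 2 * ((d:ℝ) * 0 ^ 2)) * (1 / Real.exp x) ^ d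
        = (1 / Real.exp x) ^ d := by norm_num
      _ ≤ 1 / Real.exp x := pow_le_of_le_one (by positivity) hle1 hd.ne'
      _ = Real.exp (-x) := heq
  · -- the max is 1 - s
    set u : ℝ := 1 - s with hu
    have hmax : max (1 - δ - Real.sqrt (2 * x / d)) 0 = u := by
      rw [max_eq_left h.le, hu, hsdef]; ring
    have hu0 : 0 < u := by rw [hu, hsdef]; linarith
    have hu1 : u < 1 := by rw [hu]; linarith
    have hu2pos : 0 < u ^ 2 := by positivity
    have hl : 0 ≤ (1 - u ^ 2) / (2 * u ^ 2) :=
      div_nonneg (by nlinarith) (by positivity)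
    rw [hmax]
    refine le_trans (chernoff d ((d:ℝ) * u ^ 2) hl) (ENNReal.ofReal_le_ofReal ?_)
    have h12l : 1 + 2 * ((1 - u ^ 2) / (2 * u ^ 2)) = 1 / u ^ 2 := by
      field_simp; ring
    have hsq : Real.sqrt (1 / u ^ 2) = 1 / u := by
      rw [one_div, Real.sqrt_inv, Real.sqrt_sq hu0.le, one_div]
    have hM : 1 / Real.sqrt (1 + 2 * ((1 - u ^ 2) / (2 * u ^ 2))) = u := by
      rw [h12l, hsq, one_div_one_div]
    rw [hM]
    have hexpo : (1 - u ^ 2) / (2 * u ^ 2) * ((d:ℝ) * u ^ 2) = (d:ℝ) * (1 - u ^ 2) / 2 := by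
      field_simp
    have hupow : u ^ d = Real.exp ((d:ℝ) * Real.log u) := by
      rw [← Real.exp_log hu0, ← Real.exp_nat_mul, Real.exp_log hu0]
    rw [hexpo, hupow, ← Real.exp_add, Real.exp_le_exp]
    have hlog : Real.log u ≤ u - 1 := Real.log_le_sub_one_of_pos hu0
    have hdlog : (d:ℝ) * Real.log u ≤ (d:ℝ) * (u - 1) :=
      mul_le_mul_of_nonneg_left hlog hdR.le
    nlinarith [h2x, hdlog]
end

section
/- Let Z := 1 − √(χ²(d)/d). Then E[Z] ≤ exp(−d/16) + √(π/(2d)). -/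
open MeasureTheory ProbabilityTheory

section Helpers

open Real

lemma pdf_eq : gaussianPDFReal 0 1 = fun x => (Real.sqrt (2*Real.pi))⁻¹ * Real.exp (-(1/2) * x^2) := by
  funext x
  rw [gaussianPDFReal]
  norm_num
  left
  ring_nf

lemma intIoi (n : ℕ) : ∫ x in Set.Ioi (0:ℝ), x ^ n * Real.exp (-(1/2) * x^2)
    = (1/2:ℝ) ^ (-((n:ℝ)+1)/2) * (1/2) * Real.Gamma (((n:ℝ)+1)/2) := by
  rw [← integral_rpow_mul_exp_neg_mul_rpow (p := 2) (q := (n:ℝ)) (b := 1/2) two_pos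
    (by exact lt_of_lt_of_le (by norm_num) (Nat.cast_nonneg n)) (by norm_num)]
  refine setIntegral_congr_fun measurableSet_Ioi fun x hx => ?_
  rw [Real.rpow_natCast, Real.rpow_two]

lemma intLine (k : ℕ) : ∫ x : ℝ, x ^ (2*k) * Real.exp (-(1/2) * x^2)
    = 2 * ((1/2:ℝ) ^ (-((2*k:ℝ)+1)/2) * (1/2) * Real.Gamma (((2*k:ℝ)+1)/2)) := by
  have h : ∫ x : ℝ, x ^ (2*k) * Real.exp (-(1/2) * x^2)
      = ∫ x : ℝ, (fun t : ℝ => t ^ (2*k) * Real.exp (-(1/2) * t^2)) |x| := by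
    congr 1
    funext x
    simp [pow_mul, sq_abs]
  rw [h, integral_comp_abs (f := fun t : ℝ => t ^ (2*k) * Real.exp (-(1/2) * t^2)), intIoi]
  push_cast
  ring_nf

lemma integral_gauss01 (g : ℝ → ℝ) :
    ∫ x, g x ∂(gaussianReal 0 1) = ∫ x, gaussianPDFReal 0 1 x * g x := by
  rw [gaussianReal_of_var_ne_zero _ one_ne_zero]
  have h : (gaussianPDF 0 1) = fun x => ((gaussianPDFReal 0 1 x).toNNReal : ENNReal) := rfl
  rw [h, integral_withDensity_eq_integral_smul
    (measurable_gaussianPDFReal 0 1).real_toNNReal g]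
  congr 1
  funext x
  rw [NNReal.smul_def, smul_eq_mul, Real.coe_toNNReal _ (gaussianPDFReal_nonneg 0 1 x)]

lemma gauss_pow_integrable (n : ℕ) :
    Integrable (fun x : ℝ => x ^ n) (gaussianReal 0 1) := by
  rw [gaussianReal_of_var_ne_zero _ one_ne_zero]
  have h : (gaussianPDF 0 1) = fun x => (ENNReal.ofReal (gaussianPDFReal 0 1 x)) := rfl
  rw [h, integrable_withDensity_iff (measurable_gaussianPDFReal 0 1).ennreal_ofReal
    (Filter.Eventually.of_forall fun x => ENNReal.ofReal_lt_top)]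
  have : ∀ x : ℝ, x ^ n * (ENNReal.ofReal (gaussianPDFReal 0 1 x)).toReal
      = (Real.sqrt (2*Real.pi))⁻¹ * (x ^ n * Real.exp (-(1/2) * x^2)) := by
    intro x
    rw [ENNReal.toReal_ofReal (gaussianPDFReal_nonneg 0 1 x), pdf_eq]
    ring
  rw [funext this]
  apply Integrable.const_mul
  have := integrable_rpow_mul_exp_neg_mul_sq (b := 1/2) (by norm_num) (s := n)
    (by exact lt_of_lt_of_le (by norm_num) (Nat.cast_nonneg n))
  simpa [Real.rpow_natCast] using this

lemma half_rpow (m : ℕ) : (1/2:ℝ) ^ (-(m:ℝ)/2) = Real.sqrt 2 ^ m := by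
  rw [one_div, neg_div, Real.inv_rpow (by norm_num), ← Real.rpow_neg (by norm_num),
    neg_neg]
  rw [show (m:ℝ)/2 = (1/2:ℝ) * m by ring, Real.rpow_mul (by norm_num),
    ← Real.sqrt_eq_rpow, Real.rpow_natCast]

lemma gauss_sq : ∫ x, x ^ 2 ∂(gaussianReal 0 1) = 1 := by
  rw [integral_gauss01, pdf_eq]
  have h : ∀ x : ℝ, (Real.sqrt (2*Real.pi))⁻¹ * Real.exp (-(1/2) * x^2) * x ^ 2
      = (Real.sqrt (2*Real.pi))⁻¹ * (x ^ (2*1) * Real.exp (-(1/2) * x^2)) := by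
    intro x; ring
  rw [funext h, integral_const_mul, intLine]
  have hg : Real.Gamma ((2*(1:ℝ)+1)/2) = (1/2) * Real.sqrt Real.pi := by
    rw [show (2*(1:ℝ)+1)/2 = 1/2 + 1 by norm_num, Real.Gamma_add_one (by norm_num),
      Real.Gamma_one_half_eq]
  have hp : ((1/2:ℝ)) ^ (-(2*(1:ℝ)+1)/2) = Real.sqrt 2 ^ 3 := by
    rw [show (-(2*(1:ℝ)+1)/2) = (-((3:ℕ):ℝ)/2) by norm_num, half_rpow]
  push_cast at hp ⊢
  rw [hg, hp, Real.sqrt_mul (by norm_num)]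
  have h3 : Real.sqrt 2 ^ 3 = 2 * Real.sqrt 2 := by
    rw [pow_succ, Real.sq_sqrt (by norm_num : (0:ℝ) ≤ 2)]
  have h2p : (0:ℝ) < Real.sqrt 2 := Real.sqrt_pos.mpr (by norm_num)
  have hpp : (0:ℝ) < Real.sqrt Real.pi := Real.sqrt_pos.mpr Real.pi_pos
  rw [h3]
  field_simp

lemma gauss_four : ∫ x, x ^ 4 ∂(gaussianReal 0 1) = 3 := by
  rw [integral_gauss01, pdf_eq]
  have h : ∀ x : ℝ, (Real.sqrt (2*Real.pi))⁻¹ * Real.exp (-(1/2) * x^2) * x ^ 4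
      = (Real.sqrt (2*Real.pi))⁻¹ * (x ^ (2*2) * Real.exp (-(1/2) * x^2)) := by
    intro x; ring
  rw [funext h, integral_const_mul, intLine]
  have hg : Real.Gamma ((2*(2:ℝ)+1)/2) = (3/2) * ((1/2) * Real.sqrt Real.pi) := by
    rw [show (2*(2:ℝ)+1)/2 = (1/2 + 1) + 1 by norm_num, Real.Gamma_add_one (by norm_num),
      Real.Gamma_add_one (by norm_num), Real.Gamma_one_half_eq]
    ring
  have hp : ((1/2:ℝ)) ^ (-(2*(2:ℝ)+1)/2) = Real.sqrt 2 ^ 5 := by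
    rw [show (-(2*(2:ℝ)+1)/2) = (-((5:ℕ):ℝ)/2) by norm_num, half_rpow]
  push_cast at hp ⊢
  rw [hg, hp, Real.sqrt_mul (by norm_num)]
  have h5 : Real.sqrt 2 ^ 5 = 4 * Real.sqrt 2 := by
    rw [show (5:ℕ) = 2*2+1 by norm_num, pow_succ, pow_mul,
      Real.sq_sqrt (by norm_num : (0:ℝ) ≤ 2)]
    norm_num
  have h2p : (0:ℝ) < Real.sqrt 2 := Real.sqrt_pos.mpr (by norm_num)
  have hpp : (0:ℝ) < Real.sqrt Real.pi := Real.sqrt_pos.mpr Real.pi_pos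
  rw [h5]
  field_simp
  ring

lemma pi_prod_integrable (d : ℕ) (f : Fin d → ℝ → ℝ)
    (hf : ∀ k, Integrable (f k) (gaussianReal 0 1)) :
    Integrable (fun x : Fin d → ℝ => ∏ k, f k (x k))
      (Measure.pi fun _ => gaussianReal 0 1) := by
  letI : MeasureSpace ℝ := ⟨gaussianReal 0 1⟩
  haveI : SigmaFinite (volume : Measure ℝ) := inferInstanceAs (SigmaFinite (gaussianReal 0 1))
  exact MeasureTheory.Integrable.fintype_prod (𝕜 := ℝ) hf

lemma pi_prod_integral (d : ℕ) (f : Fin d → ℝ → ℝ) :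
    ∫ x : Fin d → ℝ, (∏ k, f k (x k)) ∂(Measure.pi fun _ => gaussianReal 0 1)
      = ∏ k, ∫ t, f k t ∂(gaussianReal 0 1) := by
  letI : MeasureSpace ℝ := ⟨gaussianReal 0 1⟩
  haveI : SigmaFinite (volume : Measure ℝ) := inferInstanceAs (SigmaFinite (gaussianReal 0 1))
  exact MeasureTheory.integral_fintype_prod_eq_prod (ι := Fin d) f

lemma prod_single {d : ℕ} (i : Fin d) (n : ℕ) (x : Fin d → ℝ) :
    ∏ k, x k ^ (if k = i then n else 0) = x i ^ n := by
  rw [Finset.prod_eq_single i (fun k _ hk => by simp [hk]) (by simp)]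
  simp

lemma coord_sq_integrable (d : ℕ) (i : Fin d) :
    Integrable (fun x : Fin d → ℝ => (x i)^2) (Measure.pi fun _ => gaussianReal 0 1) := by
  have h := pi_prod_integrable d (fun k t => t ^ (if k = i then 2 else 0)) (fun k => by
    by_cases hk : k = i
    · simpa [hk] using gauss_pow_integrable 2
    · simpa [hk] using (integrable_const (1:ℝ)))
  have e : (fun x : Fin d → ℝ => ∏ k, x k ^ (if k = i then 2 else 0))
      = fun x => (x i)^2 := funext fun x => prod_single i 2 x
  rwa [e] at h

lemma coord_sq_integral (d : ℕ) (i : Fin d) :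
    ∫ x : Fin d → ℝ, (x i)^2 ∂(Measure.pi fun _ => gaussianReal 0 1) = 1 := by
  have e : (fun x : Fin d → ℝ => (x i)^2)
      = fun x => ∏ k, x k ^ (if k = i then 2 else 0) :=
    (funext fun x => prod_single i 2 x).symm
  have hv := pi_prod_integral d (fun k t => t ^ (if k = i then 2 else 0))
  rw [e, hv]
  refine Finset.prod_eq_one fun k _ => ?_
  by_cases hk : k = i
  · simpa [hk] using gauss_sq
  · simp [hk]

lemma coord_cross_integrable (d : ℕ) (i j : Fin d) :
    Integrable (fun x : Fin d → ℝ => (x i)^2 * (x j)^2)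
      (Measure.pi fun _ => gaussianReal 0 1) := by
  have h := pi_prod_integrable d
    (fun k t => t ^ ((if k = i then 2 else 0) + (if k = j then 2 else 0)))
    (fun k => gauss_pow_integrable _)
  have e : (fun x : Fin d → ℝ =>
        ∏ k, x k ^ ((if k = i then 2 else 0) + (if k = j then 2 else 0)))
      = fun x => (x i)^2 * (x j)^2 := by
    funext x
    simp only [pow_add, Finset.prod_mul_distrib, prod_single]
  rwa [e] at h

lemma coord_cross_integral (d : ℕ) (i j : Fin d) :
    ∫ x : Fin d → ℝ, (x i)^2 * (x j)^2 ∂(Measure.pi fun _ => gaussianReal 0 1)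
      = if i = j then 3 else 1 := by
  have e : (fun x : Fin d → ℝ => (x i)^2 * (x j)^2)
      = fun x => ∏ k, x k ^ ((if k = i then 2 else 0) + (if k = j then 2 else 0)) := by
    funext x
    simp only [pow_add, Finset.prod_mul_distrib, prod_single]
  have hv := pi_prod_integral d
    (fun k t => t ^ ((if k = i then 2 else 0) + (if k = j then 2 else 0)))
  rw [e, hv]
  by_cases hij : i = j
  · subst hij
    simp only [if_pos rfl]
    rw [Finset.prod_eq_single i (fun k _ hk => by simp [hk]) (by simp)]
    simpa using gauss_four
  · rw [if_neg hij]
    refine Finset.prod_eq_one fun k _ => ?_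
    by_cases hki : k = i
    · subst hki
      rw [if_pos rfl, if_neg hij]
      simpa using gauss_sq
    · by_cases hkj : k = j
      · subst hkj
        rw [if_neg hki, if_pos rfl]
        simpa using gauss_sq
      · simp [hki, hkj]

end Helpers

/-- Let `Z := 1 − √(χ²(d)/d)`.  Then `E[Z] ≤ exp(−d/16) + √(π/(2d))`. -/
theorem chiSq_expectation_one_sub_sqrt (d : ℕ) (hd : 1 ≤ d) :
    ∫ y, (1 - Real.sqrt (y / d)) ∂(chiSq d) ≤
      Real.exp (-(d : ℝ) / 16) + Real.sqrt (Real.pi / (2 * d)) := by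
  have hd0 : (0:ℝ) < d := by exact_mod_cast hd
  set P : Measure (Fin d → ℝ) := Measure.pi fun _ => gaussianReal 0 1 with hP
  set S : (Fin d → ℝ) → ℝ := fun x => ∑ i, x i ^ 2 with hSdef
  have hS : Measurable S :=
    Finset.measurable_sum _ fun i _ => (measurable_pi_apply i).pow_const 2
  have hchi : chiSq d = P.map S := rfl
  haveI : IsProbabilityMeasure P := Measure.pi.instIsProbabilityMeasure _
  haveI hprob : IsProbabilityMeasure (chiSq d) := by
    rw [hchi]; exact Measure.isProbabilityMeasure_map hS.aemeasurable
  -- moments of S under P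
  have hSint : Integrable S P := integrable_finset_sum _ fun i _ => coord_sq_integrable d i
  have hSval : ∫ x, S x ∂P = d := by
    rw [hSdef, integral_finset_sum _ fun i _ => coord_sq_integrable d i]
    simp [coord_sq_integral d]
  have hS2e : (fun x => S x ^ 2) = fun x : Fin d → ℝ => ∑ i, ∑ j, (x i)^2 * (x j)^2 := by
    funext x
    rw [sq, hSdef, Finset.sum_mul_sum]
  have hS2int : Integrable (fun x => S x ^ 2) P := by
    rw [hS2e]
    exact integrable_finset_sum _ fun i _ =>
      integrable_finset_sum _ fun j _ => coord_cross_integrable d i j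
  have hS2val : ∫ x, S x ^ 2 ∂P = (d:ℝ)^2 + 2*d := by
    rw [hS2e, integral_finset_sum _ fun i _ =>
      integrable_finset_sum _ fun j _ => coord_cross_integrable d i j]
    have : ∀ i : Fin d, (∫ x, (∑ j, (x i)^2 * (x j)^2) ∂P) = (d:ℝ) + 2 := by
      intro i
      rw [integral_finset_sum _ fun j _ => coord_cross_integrable d i j]
      have h1 : ∀ j : Fin d, (∫ x, (x i)^2 * (x j)^2 ∂P) = 1 + (if i = j then (2:ℝ) else 0) := by
        intro j
        rw [coord_cross_integral d i j]
        by_cases h : i = j <;> simp [h] <;> norm_num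
      rw [Finset.sum_congr rfl fun j _ => h1 j, Finset.sum_add_distrib, Finset.sum_ite_eq]
      simp [Finset.card_univ]
    rw [Finset.sum_congr rfl fun i _ => this i]
    simp [Finset.card_univ]
    ring
  -- transfer to chiSq d
  have hmapInt : ∀ g : ℝ → ℝ, Measurable g →
      Integrable (fun x => g (S x)) P → Integrable g (chiSq d) := by
    intro g hg h
    rw [hchi]
    exact (integrable_map_measure hg.aestronglyMeasurable hS.aemeasurable).mpr h
  have hmapval : ∀ g : ℝ → ℝ, Measurable g →
      ∫ y, g y ∂(chiSq d) = ∫ x, g (S x) ∂P := by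
    intro g hg
    rw [hchi]
    exact integral_map hS.aemeasurable hg.aestronglyMeasurable
  have hIy : Integrable (fun y => y) (chiSq d) := hmapInt _ measurable_id hSint
  have hEy : ∫ y, y ∂(chiSq d) = d :=
    (hmapval (fun y => y) measurable_id).trans hSval
  have hIy2 : Integrable (fun y => y^2) (chiSq d) :=
    hmapInt _ (measurable_id.pow_const 2) hS2int
  have hEy2 : ∫ y, y^2 ∂(chiSq d) = (d:ℝ)^2 + 2*d :=
    (hmapval (fun y => y^2) (measurable_id.pow_const 2)).trans hS2val
  have hae : ∀ᵐ y ∂(chiSq d), 0 ≤ y := by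
    rw [hchi]
    have hms : MeasurableSet {y : ℝ | 0 ≤ y} := measurableSet_Ici
    refine (ae_map_iff hS.aemeasurable hms).mpr ?_
    refine Filter.Eventually.of_forall fun x => ?_
    exact Finset.sum_nonneg fun i _ => sq_nonneg _
  have hIsqrt : Integrable (fun y => Real.sqrt y) (chiSq d) := by
    refine Integrable.mono' ((integrable_const (1:ℝ)).add hIy.abs)
      Real.continuous_sqrt.measurable.aestronglyMeasurable
      (Filter.Eventually.of_forall fun y => ?_)
    simp only [Pi.add_apply]
    rw [Real.norm_eq_abs, abs_of_nonneg (Real.sqrt_nonneg y)]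
    rcases le_or_gt y 0 with h | h
    · rw [Real.sqrt_eq_zero'.mpr h]
      positivity
    · have h1 : Real.sqrt y ^ 2 = y := Real.sq_sqrt h.le
      have h2 : |y| = y := abs_of_nonneg h.le
      nlinarith [sq_nonneg (Real.sqrt y - 1), Real.sqrt_nonneg y]
  have hsd : ∀ y : ℝ, Real.sqrt (y / d) = Real.sqrt y / Real.sqrt d := by
    intro y
    rcases le_or_gt 0 y with h | h
    · exact Real.sqrt_div h d
    · have h1 : Real.sqrt (y/d) = 0 :=
        Real.sqrt_eq_zero'.mpr (div_nonpos_iff.mpr (Or.inr ⟨h.le, hd0.le⟩))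
      have h2 : Real.sqrt y = 0 := Real.sqrt_eq_zero'.mpr h.le
      rw [h1, h2, zero_div]
  have hsdpos : 0 < Real.sqrt d := Real.sqrt_pos.mpr hd0
  set A := ∫ y, Real.sqrt y ∂(chiSq d) with hA
  -- E1
  have hE1 : ∫ y, (1 - Real.sqrt (y / d)) ∂(chiSq d) = 1 - A / Real.sqrt d := by
    have e : (fun y : ℝ => 1 - Real.sqrt (y/d)) = fun y => 1 - Real.sqrt y / Real.sqrt d := by
      funext y; rw [hsd]
    rw [e, integral_sub (integrable_const 1) (hIsqrt.div_const _), integral_const,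
      probReal_univ, integral_div]
    simp
    rfl
  -- E2
  have hIquad : Integrable (fun y => 1 - 2 * Real.sqrt y / Real.sqrt d + y/d) (chiSq d) :=
    ((integrable_const 1).sub ((hIsqrt.const_mul 2).div_const _)).add (hIy.div_const _)
  have hE2feq : ∀ᵐ y ∂(chiSq d),
      (1 - Real.sqrt (y/d))^2 = 1 - 2 * Real.sqrt y / Real.sqrt d + y/d := by
    filter_upwards [hae] with y hy
    rw [hsd]
    have h1 : Real.sqrt y ^ 2 = y := Real.sq_sqrt hy
    have h2 : Real.sqrt (d:ℝ) ^ 2 = (d:ℝ) := Real.sq_sqrt hd0.le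
    rw [sub_sq, one_pow, mul_one, div_pow, h1, h2]
    ring
  have hIZ2 : Integrable (fun y => (1 - Real.sqrt (y/d))^2) (chiSq d) :=
    hIquad.congr (hE2feq.mono fun y h => h.symm)
  have hE2 : ∫ y, (1 - Real.sqrt (y/d))^2 ∂(chiSq d) = 2 * (1 - A / Real.sqrt d) := by
    have i1 : Integrable (fun y : ℝ => 1 - 2 * Real.sqrt y / Real.sqrt d) (chiSq d) :=
      (integrable_const 1).sub ((hIsqrt.const_mul 2).div_const _)
    have i2 : Integrable (fun y : ℝ => y / (d:ℝ)) (chiSq d) := hIy.div_const _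
    have i3 : Integrable (fun y : ℝ => 2 * Real.sqrt y / Real.sqrt d) (chiSq d) :=
      (hIsqrt.const_mul 2).div_const _
    rw [integral_congr_ae hE2feq, integral_add i1 i2,
      integral_sub (integrable_const 1) i3,
      integral_div, integral_const_mul, integral_div, hEy, integral_const, probReal_univ, ← hA,
      div_self hd0.ne']
    simp only [smul_eq_mul, mul_one]
    ring
  -- E3
  have e3 : (fun y : ℝ => (1 - y/(d:ℝ))^2) = fun y : ℝ => 1 - 2*(y/(d:ℝ)) + y^2/(d:ℝ)^2 := by
    funext y; field_simp; ring
  have j1 : Integrable (fun y : ℝ => 1 - 2*(y/(d:ℝ))) (chiSq d) :=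
    (integrable_const 1).sub ((hIy.div_const _).const_mul 2)
  have j2 : Integrable (fun y : ℝ => y^2/(d:ℝ)^2) (chiSq d) := hIy2.div_const _
  have j3 : Integrable (fun y : ℝ => 2*(y/(d:ℝ))) (chiSq d) := (hIy.div_const _).const_mul 2
  have hI3 : Integrable (fun y : ℝ => (1 - y/(d:ℝ))^2) (chiSq d) := by
    rw [e3]
    exact j1.add j2
  have hE3 : ∫ y, (1 - y/(d:ℝ))^2 ∂(chiSq d) = 2/(d:ℝ) := by
    rw [e3, integral_add j1 j2, integral_sub (integrable_const 1) j3,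
      integral_const_mul, integral_div, integral_div, hEy, hEy2, integral_const, probReal_univ]
    simp only [smul_eq_mul, mul_one]
    field_simp
    ring
  -- compare
  have hmono : ∫ y, (1 - Real.sqrt (y/d))^2 ∂(chiSq d) ≤ ∫ y, (1 - y/(d:ℝ))^2 ∂(chiSq d) := by
    refine integral_mono_ae hIZ2 hI3 ?_
    filter_upwards [hae] with y hy
    have hu : 0 ≤ y / d := div_nonneg hy hd0.le
    have hs := Real.sqrt_nonneg (y/d)
    have hsq := Real.sq_sqrt hu
    nlinarith [sq_nonneg (1 - Real.sqrt (y/d)),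
      mul_nonneg (mul_nonneg (sq_nonneg (1 - Real.sqrt (y/d))) hs) hs,
      mul_nonneg (sq_nonneg (1 - Real.sqrt (y/d))) hs]
  have key : ∫ y, (1 - Real.sqrt (y / d)) ∂(chiSq d) ≤ 1 / d := by
    rw [hE1]
    rw [hE2, hE3] at hmono
    rw [show (2:ℝ)/(d:ℝ) = 2*(1/(d:ℝ)) by ring] at hmono
    linarith
  refine key.trans ?_
  have h1 : (1:ℝ)/d ≤ Real.sqrt (Real.pi / (2*d)) := by
    have e : (1:ℝ)/d = Real.sqrt ((1/d)^2) := (Real.sqrt_sq (by positivity)).symm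
    rw [e]
    apply Real.sqrt_le_sqrt
    rw [div_pow, one_pow, div_le_div_iff₀ (by positivity) (by positivity)]
    have hpi := Real.pi_gt_three
    have hd1 : (1:ℝ) ≤ d := by exact_mod_cast hd
    nlinarith
  have := Real.exp_pos (-(d:ℝ)/16)
  linarith
end
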